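/- Uniqueness of signs up to gauge: if N = (V,E) is a directed network on a closed orientable surface with boundary in which every vertex lies on a path between boundary vertices, and ε, ε' ∈ {±1}^E both satisfy B(N,{x_e}) = A(N,{ε_e x_e}) and B(N,{x_e}) = A(N,{ε'_e x_e}), then ε and ε' are gauge equivalent: there exists g ∈ ({±1})^{int(V)} with ε'_{(u,v)} = g_v^{-1} ε_{(u,v)} g_u for all edges (extending g by 1 on boundary vertices). -/
import Mathlib


variable {V E : Type*}

/-- `es` is the edge list of a directed path from `i` to `j`. -/
def IsPath (src tgt : E → V) (es : List E) (i j : V) : Prop :=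
  es.map src ++ [j] = i :: es.map tgt

/-- The list of vertices visited by a path starting at `i` with edge list `es`. -/
def pvisits (tgt : E → V) (i : V) (es : List E) : List V := i :: es.map tgt

/-- The exponent (as a monomial) of the weight of the path with edge list `es`. -/
noncomputable def expOf [DecidableEq E] (es : List E) : E →₀ ℕ :=
  (es.map fun e => Finsupp.single e 1).sum

/-- The generic matrix entry `∑_{P : i ⇝ j} c(P) wt(P)` in `ℝ[[x_e : e ∈ E]]`. -/
noncomputable def wEntry [DecidableEq E] (src tgt : E → V) (c : List E → ℝ) (i j : V) :
    MvPowerSeries E ℝ :=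
  fun d => ∑ᶠ es : {es : List E // IsPath src tgt es i j ∧ expOf es = d}, c es.1

lemma isPath_nil {src tgt : E → V} {i j : V} : IsPath src tgt [] i j ↔ i = j := by
  simp [IsPath, eq_comm]

lemma isPath_cons {src tgt : E → V} {e : E} {es : List E} {i j : V} :
    IsPath src tgt (e :: es) i j ↔ src e = i ∧ IsPath src tgt es (tgt e) j := by
  simp [IsPath]

lemma isPath_append {src tgt : E → V} {es1 es2 : List E} {i v j : V}
    (h1 : IsPath src tgt es1 i v) (h2 : IsPath src tgt es2 v j) :
    IsPath src tgt (es1 ++ es2) i j := by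
  induction es1 generalizing i with
  | nil => rw [isPath_nil] at h1; subst h1; simpa
  | cons e es ih =>
    rw [isPath_cons] at h1
    rw [List.cons_append, isPath_cons]
    exact ⟨h1.1, ih h1.2⟩

lemma isPath_split {src tgt : E → V} {es : List E} {i j v : V}
    (h : IsPath src tgt es i j) (hv : v ∈ pvisits tgt i es) :
    ∃ es1 es2, es = es1 ++ es2 ∧ IsPath src tgt es1 i v ∧ IsPath src tgt es2 v j := by
  induction es generalizing i with
  | nil =>
    simp [pvisits] at hv
    exact ⟨[], [], rfl, isPath_nil.2 hv.symm, by subst hv; exact h⟩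
  | cons e es ih =>
    rw [isPath_cons] at h
    rcases List.mem_cons.1 hv with hv | hv
    · exact ⟨[], e :: es, rfl, isPath_nil.2 hv.symm, by subst hv; exact isPath_cons.2 h⟩
    · obtain ⟨a, b, hab, ha, hb⟩ := ih h.2 hv
      exact ⟨e :: a, b, by rw [hab]; rfl, isPath_cons.2 ⟨h.1, ha⟩, hb⟩

lemma expOf_nil [DecidableEq E] : expOf ([] : List E) = 0 := rfl

lemma expOf_cons [DecidableEq E] (e : E) (es : List E) :
    expOf (e :: es) = Finsupp.single e 1 + expOf es := by
  simp [expOf]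

lemma expOf_append [DecidableEq E] (es1 es2 : List E) :
    expOf (es1 ++ es2) = expOf es1 + expOf es2 := by
  induction es1 with
  | nil => simp [expOf_nil]
  | cons e es ih => simp [expOf_cons, ih, add_assoc]

lemma count_expOf [DecidableEq E] (es : List E) (a : E) :
    expOf es a = es.count a := by
  induction es with
  | nil => simp [expOf_nil]
  | cons e es ih =>
    rw [expOf_cons, Finsupp.add_apply, ih, Finsupp.single_apply, List.count_cons]
    rcases eq_or_ne a e with h | h <;> simp [h, add_comm]

lemma sum_expOf [DecidableEq E] (es : List E) :
    (expOf es).sum (fun _ n => n) = es.length := by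
  induction es with
  | nil => simp [expOf_nil]
  | cons e es ih =>
    rw [expOf_cons, Finsupp.sum_add_index' (by simp) (fun _ _ _ => rfl), ih,
      Finsupp.sum_single_index rfl]
    rw [List.length_cons]
    omega

lemma prod_map_expOf [DecidableEq E] (f : E → ℝ) (es : List E) :
    (es.map f).prod = (expOf es).prod (fun e n => f e ^ n) := by
  induction es with
  | nil => simp [expOf_nil]
  | cons e es ih =>
    rw [List.map_cons, List.prod_cons, expOf_cons,
      Finsupp.prod_add_index' (fun _ => pow_zero _) (fun _ _ _ => pow_add _ _ _), ih]
    congr 1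
    simp

lemma prod_map_congr_expOf [DecidableEq E] (f : E → ℝ) {es es' : List E}
    (h : expOf es = expOf es') : (es.map f).prod = (es'.map f).prod := by
  rw [prod_map_expOf, prod_map_expOf, h]

lemma finite_expOf [DecidableEq E] (d : E →₀ ℕ) : {es : List E | expOf es = d}.Finite := by
  have hsub : {es : List E | expOf es = d} ⊆
      (List.map (Subtype.val) '' {l : List {x // x ∈ d.support} |
        l.length ≤ d.sum fun _ n => n}) := by
    intro es hes
    have hmem : ∀ e ∈ es, e ∈ d.support := by
      intro e he
      rw [Finsupp.mem_support_iff, ← hes, count_expOf]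
      have := List.count_pos_iff.2 he
      omega
    refine ⟨es.attach.map fun x => ⟨x.1, hmem x.1 x.2⟩, ?_, ?_⟩
    · simp only [Set.mem_setOf_eq, List.length_map, List.length_attach]
      rw [← hes, sum_expOf]
    · simp [List.map_map, Function.comp]
  exact ((List.finite_length_le _ _).image _).subset hsub

lemma wEntry_coeff_eq [DecidableEq E] {src tgt : E → V} {c1 c2 : List E → ℝ}
    {i j : V} (h : wEntry src tgt c1 i j = wEntry src tgt c2 i j)
    (hc1 : ∀ es es' : List E, expOf es = expOf es' → c1 es = c1 es')
    (hc2 : ∀ es es' : List E, expOf es = expOf es' → c2 es = c2 es')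
    {es : List E} (hes : IsPath src tgt es i j) : c1 es = c2 es := by
  classical
  set d := expOf es with hd
  have hfin : Finite {es' : List E // IsPath src tgt es' i j ∧ expOf es' = d} := by
    have hs : {es' : List E | IsPath src tgt es' i j ∧ expOf es' = d}.Finite :=
      (finite_expOf d).subset fun x hx => hx.2
    exact hs.to_subtype
  haveI := Fintype.ofFinite {es' : List E // IsPath src tgt es' i j ∧ expOf es' = d}
  have hcoeff := congrFun h d
  simp only [wEntry] at hcoeff
  rw [finsum_eq_sum_of_fintype, finsum_eq_sum_of_fintype] at hcoeff
  have h1 : ∑ x : {es' : List E // IsPath src tgt es' i j ∧ expOf es' = d}, c1 x.1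
      = (Fintype.card {es' : List E // IsPath src tgt es' i j ∧ expOf es' = d}) * c1 es := by
    rw [Finset.sum_congr rfl (fun x _ => hc1 x.1 es (by rw [x.2.2]))]
    simp [mul_comm]
  have h2 : ∑ x : {es' : List E // IsPath src tgt es' i j ∧ expOf es' = d}, c2 x.1
      = (Fintype.card {es' : List E // IsPath src tgt es' i j ∧ expOf es' = d}) * c2 es := by
    rw [Finset.sum_congr rfl (fun x _ => hc2 x.1 es (by rw [x.2.2]))]
    simp [mul_comm]
  rw [h1, h2] at hcoeff
  have hcard : (Fintype.card {es' : List E // IsPath src tgt es' i j ∧ expOf es' = d} : ℝ) ≠ 0 := by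
    have : Nonempty {es' : List E // IsPath src tgt es' i j ∧ expOf es' = d} := ⟨⟨es, hes, rfl⟩⟩
    simp [Fintype.card_ne_zero]
  exact mul_left_cancel₀ hcard hcoeff

/-- Corollary 5.3 of the paper (uniqueness of signs up to gauge): if every vertex of
`N` lies on a directed path from a boundary source to a boundary vertex and
`ε, ε' ∈ {±1}^E` both satisfy `B(N, {x_e}) = A(N, {ε_e x_e})` and
`B(N, {x_e}) = A(N, {ε'_e x_e})`, then `ε` and `ε'` are gauge equivalent via a gauge
element with values in `{±1}`, equal to `1` on boundary vertices. -/
theorem sign_uniqueness [DecidableEq E] (src tgt : E → V)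
    (K I : Finset V) (hIK : I ⊆ K)
    (hcover : ∀ v : V, ∃ i ∈ I, ∃ j ∈ K, ∃ es : List E,
      IsPath src tgt es i j ∧ v ∈ pvisits tgt i es)
    (s : V → V → ℕ) (r : List E → ℤ)
    (ε ε' : E → ℝ)
    (hε : ∀ e, ε e = 1 ∨ ε e = -1) (hε' : ∀ e, ε' e = 1 ∨ ε' e = -1)
    (hB : ∀ i ∈ I, ∀ j ∈ K,
      wEntry src tgt (fun es => (-1 : ℝ) ^ ((s i j : ℤ) + r es + 1)) i j =
        wEntry src tgt (fun es => (es.map ε).prod) i j)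
    (hB' : ∀ i ∈ I, ∀ j ∈ K,
      wEntry src tgt (fun es => (-1 : ℝ) ^ ((s i j : ℤ) + r es + 1)) i j =
        wEntry src tgt (fun es => (es.map ε').prod) i j) :
    ∃ g : V → ℝ, (∀ v, g v = 1 ∨ g v = -1) ∧ (∀ v ∈ K, g v = 1) ∧
      ∀ e : E, ε' e = (g (tgt e))⁻¹ * ε e * g (src e) := by
  classical
  have hprod : ∀ i ∈ I, ∀ j ∈ K, ∀ es : List E, IsPath src tgt es i j →
      (es.map ε).prod = (es.map ε').prod := by
    intro i hi j hj es hes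
    exact wEntry_coeff_eq ((hB i hi j hj).symm.trans (hB' i hi j hj))
      (fun a b hab => prod_map_congr_expOf ε hab)
      (fun a b hab => prod_map_congr_expOf ε' hab) hes
  set δ : E → ℝ := fun e => ε e * ε' e with hδ
  have hδpm : ∀ e, δ e = 1 ∨ δ e = -1 := by
    intro e
    rcases hε e with h | h <;> rcases hε' e with h' | h' <;> simp [hδ, h, h']
  have hprodpm : ∀ (f : E → ℝ), (∀ e, f e = 1 ∨ f e = -1) → ∀ es : List E,
      (es.map f).prod = 1 ∨ (es.map f).prod = -1 := by
    intro f hf es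
    induction es with
    | nil => left; simp
    | cons e es ih => rcases hf e with h | h <;> rcases ih with h2 | h2 <;> simp [h, h2]
  have hone : ∀ i ∈ I, ∀ j ∈ K, ∀ es : List E, IsPath src tgt es i j →
      (es.map δ).prod = 1 := by
    intro i hi j hj es hes
    have h1 : (es.map δ).prod = (es.map ε).prod * (es.map ε').prod := by
      simp only [hδ]
      exact List.prod_map_mul
    rw [h1, ← hprod i hi j hj es hes]
    rcases hprodpm ε hε es with h | h <;> rw [h] <;> norm_num
  have hto : ∀ v : V, ∃ i, i ∈ I ∧ ∃ es1 : List E, IsPath src tgt es1 i v := by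
    intro v
    obtain ⟨i, hi, j, hj, es, hes, hv⟩ := hcover v
    obtain ⟨a, b, -, ha, -⟩ := isPath_split hes hv
    exact ⟨i, hi, a, ha⟩
  have hfrom : ∀ v : V, ∃ j ∈ K, ∃ es2 : List E, IsPath src tgt es2 v j := by
    intro v
    obtain ⟨i, hi, j, hj, es, hes, hv⟩ := hcover v
    obtain ⟨a, b, -, -, hb⟩ := isPath_split hes hv
    exact ⟨j, hj, b, hb⟩
  choose iv hiv pv' hpv' using hto
  refine ⟨fun v => ((pv' v).map δ).prod, fun v => hprodpm δ hδpm (pv' v), ?_, ?_⟩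
  · intro v hv
    exact hone (iv v) (hiv v) v hv (pv' v) (hpv' v)
  · have hwd : ∀ v, ∀ i ∈ I, ∀ es1 : List E, IsPath src tgt es1 i v →
        (es1.map δ).prod = ((pv' v).map δ).prod := by
      intro v i hi es1 h1
      obtain ⟨j, hj, b, hb⟩ := hfrom v
      have e1 := hone i hi j hj (es1 ++ b) (isPath_append h1 hb)
      have e2 := hone (iv v) (hiv v) j hj (pv' v ++ b) (isPath_append (hpv' v) hb)
      rw [List.map_append, List.prod_append] at e1 e2
      have hbne : ((b.map δ).prod) ≠ 0 := by
        rcases hprodpm δ hδpm b with h | h <;> rw [h] <;> norm_num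
      exact mul_right_cancel₀ hbne (e1.trans e2.symm)
    intro e
    have hpath : IsPath src tgt (pv' (src e) ++ [e]) (iv (src e)) (tgt e) :=
      isPath_append (hpv' (src e)) (isPath_cons.2 ⟨rfl, isPath_nil.2 rfl⟩)
    have hgrel : ((pv' (tgt e)).map δ).prod = ((pv' (src e)).map δ).prod * δ e := by
      rw [← hwd (tgt e) (iv (src e)) (hiv (src e)) _ hpath, List.map_append, List.prod_append]
      simp
    show ε' e = ((List.map δ (pv' (tgt e))).prod)⁻¹ * ε e * (List.map δ (pv' (src e))).prod
    rw [hgrel]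
    have hδe : δ e = ε e * ε' e := rfl
    rcases hprodpm δ hδpm (pv' (src e)) with h3 | h3 <;>
      rcases hε e with h1 | h1 <;> rcases hε' e with h2 | h2 <;>
      rw [h3, hδe, h1, h2] <;> norm_num
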